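/- (Completeness direction of the PARTITION reduction, abstract form) Let a₁,…,a_n be positive integers with ∑ aᵢ = 2L. There exists a subset I ⊆ {1,…,n} with ∑_{i∈I} aᵢ = L if and only if the edges e_i (of length a_i) and e'_i (of length 0) can be oriented so that there exist two edge-disjoint directed paths from v₁ to v_{n+1} and from v_{n+1} to v₁, each of total length exactly L, where for each i exactly one of {e_i, e'_i} is used in each direction. -/
import Mathlib


open Finset in
/-- PARTITION reduction, abstract form: a subset summing to `L` exists iff the
parallel edges can be oriented (via `σ`) so that the forward and backward paths
both have length exactly `L`. -/
theorem partition_iff_orientation (n : ℕ) (a : Fin n → ℕ) (L : ℕ)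
    (hpos : ∀ i, 0 < a i) (hsum : ∑ i, a i = 2 * L) :
    (∃ I : Finset (Fin n), ∑ i ∈ I, a i = L) ↔
      (∃ σ : Fin n → Bool,
        (∑ i ∈ Finset.univ.filter (fun i => σ i = true), a i = L) ∧
        (∑ i ∈ Finset.univ.filter (fun i => σ i = false), a i = L)) := by
  constructor
  · rintro ⟨I, hI⟩
    refine ⟨fun i => decide (i ∈ I), ?_, ?_⟩
    · rw [← hI]
      apply Finset.sum_congr _ (fun _ _ => rfl)
      ext i; simp
    · have key : ∑ i ∈ Finset.univ.filter (fun i => decide (i ∈ I) = false), a i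
          = ∑ i ∈ Iᶜ, a i := by
        apply Finset.sum_congr _ (fun _ _ => rfl)
        ext i; simp
      rw [key]
      have := Finset.sum_add_sum_compl I a
      omega
  · rintro ⟨σ, h1, _⟩
    exact ⟨Finset.univ.filter (fun i => σ i = true), h1⟩
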